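/- Let k = 2^i·n where i > 1 and n ≥ 3 is odd, and let A be a k×k circulant matrix over a finite field F of characteristic 2. Suppose A is semi-orthogonal with associated non-singular diagonal matrices D₁ and D₂, i.e., (A⁻¹)ᵀ = D₁·A·D₂. If A is MDS, then trace(D₁) = 0 and trace(D₂) = 0. -/

import Mathlib

open Matrix

/-- The `n × n` circulant matrix with first row `c₀, c₁, …, c_{n-1}`, i.e. the matrix whose
`(i,j)` entry is `c_{(j - i) mod n}`. -/
def circulantM {n : ℕ} {F : Type*} (c : Fin n → F) : Matrix (Fin n) (Fin n) F :=
  Matrix.of fun i j => c (j - i)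

/-- A square matrix over a field is MDS if every square submatrix (including the matrix
itself) is non-singular. -/
def IsMDS {n : ℕ} {F : Type*} [Field F] (A : Matrix (Fin n) (Fin n) F) : Prop :=
  ∀ (s : ℕ) (r c : Fin s → Fin n), Function.Injective r → Function.Injective c →
    (A.submatrix r c).det ≠ 0

open Fin.NatCast Fin.CommRing in
/-- Sum of a "geometric" sequence on `Fin k` vanishes in characteristic 2 when `k` is even. -/
lemma sum_geom_fin_eq_zero {F : Type*} [Field F] [CharP F 2] {k : ℕ} [NeZero k]
    (hk : 2 ∣ k) (d : Fin k → F) (γ : F)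
    (hstep : ∀ i : Fin k, d (i + 1) = d i * γ) (h0 : d 0 ≠ 0) :
    ∑ i, d i = 0 := by
  have hf : ∀ m : ℕ, d (m : Fin k) = d 0 * γ ^ m := by
    intro m
    induction m with
    | zero => simp
    | succ m ih =>
        have hcast : ((m + 1 : ℕ) : Fin k) = (m : Fin k) + 1 := by push_cast; ring
        rw [hcast, hstep, ih, pow_succ, mul_assoc]
  have hγk : γ ^ k = 1 := by
    have h1 : d 0 = d 0 * γ ^ k := by
      have h1' := hf k
      rw [Fin.natCast_self] at h1'
      exact h1'
    have h2 : d 0 * 1 = d 0 * γ ^ k := by rw [mul_one]; exact h1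
    exact (mul_left_cancel₀ h0 h2).symm
  have hsum : ∑ i : Fin k, d i = ∑ m ∈ Finset.range k, d 0 * γ ^ m := by
    rw [← Fin.sum_univ_eq_sum_range (fun m => d 0 * γ ^ m) k]
    exact Finset.sum_congr rfl fun j _ => by rw [← hf j.val, Fin.cast_val_eq_self]
  rw [hsum, ← Finset.mul_sum]
  rcases eq_or_ne γ 1 with h | h
  · obtain ⟨t, rfl⟩ := hk
    have h2 : (2 : F) = 0 := by exact_mod_cast CharP.cast_eq_zero F 2
    simp only [h, one_pow, Finset.sum_const, Finset.card_range, nsmul_eq_mul, mul_one]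
    push_cast
    rw [h2]
    ring
  · have hg := geom_sum_mul γ k
    rw [hγk, sub_self] at hg
    rcases mul_eq_zero.mp hg with h' | h'
    · rw [h', mul_zero]
    · exact absurd (sub_eq_zero.mp h') h

/-- Let `k = 2^i * n` with `i > 1` and `n ≥ 3` odd, and let `A` be a `k × k`
circulant matrix over a finite field `F` of characteristic 2. Suppose `A` is semi-orthogonal
with associated non-singular diagonal matrices `D₁, D₂`, i.e. `(A⁻¹)ᵀ = D₁ * A * D₂`.
If `A` is MDS, then `trace D₁ = 0` and `trace D₂ = 0`. -/
theorem trace_eq_zero_of_circulant_semiOrthogonal_mds {F : Type*} [Field F] [Fintype F]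
    [CharP F 2] {i n : ℕ} (hi : 1 < i) (hn : 3 ≤ n) (hodd : Odd n)
    (c : Fin (2 ^ i * n) → F) (A : Matrix (Fin (2 ^ i * n)) (Fin (2 ^ i * n)) F)
    (hA : A = circulantM c) (hAdet : A.det ≠ 0)
    (D₁ D₂ : Matrix (Fin (2 ^ i * n)) (Fin (2 ^ i * n)) F)
    (hD₁diag : D₁.IsDiag) (hD₂diag : D₂.IsDiag)
    (hD₁det : D₁.det ≠ 0) (hD₂det : D₂.det ≠ 0)
    (hso : (A⁻¹)ᵀ = D₁ * A * D₂)
    (hmds : IsMDS A) :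
    D₁.trace = 0 ∧ D₂.trace = 0 := by
  haveI : NeZero (2 ^ i * n) :=
    ⟨Nat.mul_ne_zero (pow_ne_zero _ two_ne_zero) (by omega)⟩
  have hkeven : 2 ∣ 2 ^ i * n := Dvd.dvd.mul_right (dvd_pow_self 2 (by omega)) n
  -- all entries of the circulant are nonzero (1×1 minors)
  have hc : ∀ t : Fin (2 ^ i * n), c t ≠ 0 := by
    intro t h0
    have h := hmds 1 (fun _ => 0) (fun _ => t)
      (fun a b _ => Subsingleton.elim a b) (fun a b _ => Subsingleton.elim a b)
    apply h
    rw [Matrix.det_fin_one]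
    simp [Matrix.submatrix_apply, hA, circulantM, h0]
  -- diagonal entries
  set d₁ : Fin (2 ^ i * n) → F := D₁.diag with hd₁
  set d₂ : Fin (2 ^ i * n) → F := D₂.diag with hd₂
  have hD₁eq : D₁ = Matrix.diagonal d₁ := (hD₁diag.diagonal_diag).symm
  have hD₂eq : D₂ = Matrix.diagonal d₂ := (hD₂diag.diagonal_diag).symm
  have hd₁ne : ∀ j, d₁ j ≠ 0 := by
    intro j
    rw [hD₁eq, Matrix.det_diagonal] at hD₁det
    exact Finset.prod_ne_zero_iff.mp hD₁det j (Finset.mem_univ j)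
  have hd₂ne : ∀ j, d₂ j ≠ 0 := by
    intro j
    rw [hD₂eq, Matrix.det_diagonal] at hD₂det
    exact Finset.prod_ne_zero_iff.mp hD₂det j (Finset.mem_univ j)
  have hAunit : IsUnit A.det := isUnit_iff_ne_zero.mpr hAdet
  -- the inverse of a circulant is shift-invariant
  have hAsub : A.submatrix (Equiv.addRight (1 : Fin (2 ^ i * n)))
      (Equiv.addRight (1 : Fin (2 ^ i * n))) = A := by
    ext p q
    simp only [Matrix.submatrix_apply, hA, circulantM, Matrix.of_apply, Equiv.coe_addRight]
    congr 1
    abel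
  have hinvsub : A⁻¹ = A⁻¹.submatrix (Equiv.addRight (1 : Fin (2 ^ i * n)))
      (Equiv.addRight (1 : Fin (2 ^ i * n))) := by
    apply Matrix.inv_eq_right_inv
    calc A * A⁻¹.submatrix (Equiv.addRight (1 : Fin (2 ^ i * n))) (Equiv.addRight 1)
        = A.submatrix (Equiv.addRight (1 : Fin (2 ^ i * n))) (Equiv.addRight 1) *
            A⁻¹.submatrix (Equiv.addRight (1 : Fin (2 ^ i * n))) (Equiv.addRight 1) := by
          rw [hAsub]
      _ = (A * A⁻¹).submatrix (Equiv.addRight (1 : Fin (2 ^ i * n))) (Equiv.addRight 1) :=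
          Matrix.submatrix_mul_equiv _ _ _ _ _
      _ = (1 : Matrix (Fin (2 ^ i * n)) (Fin (2 ^ i * n)) F).submatrix
            (Equiv.addRight (1 : Fin (2 ^ i * n))) (Equiv.addRight 1) := by
          rw [Matrix.mul_nonsing_inv A hAunit]
      _ = 1 := Matrix.submatrix_one_equiv _
  have hinv : ∀ p q : Fin (2 ^ i * n), A⁻¹ (p + 1) (q + 1) = A⁻¹ p q := by
    intro p q
    conv_rhs => rw [hinvsub]
    simp [Matrix.submatrix_apply]
  -- entrywise form of semi-orthogonality
  have hentry : ∀ p q : Fin (2 ^ i * n), A⁻¹ q p = d₁ p * A p q * d₂ q := by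
    intro p q
    have h := congrFun (congrFun hso p) q
    rw [Matrix.transpose_apply] at h
    rw [h, hD₁eq, hD₂eq, Matrix.mul_diagonal, Matrix.diagonal_mul]
  -- key multiplicative relation
  have key : ∀ p q : Fin (2 ^ i * n), d₁ (p + 1) * d₂ (q + 1) = d₁ p * d₂ q := by
    intro p q
    have e1 := hentry (p + 1) (q + 1)
    have e2 := hentry p q
    rw [hinv] at e1
    have hApq : A (p + 1) (q + 1) = A p q := by
      simp only [hA, circulantM, Matrix.of_apply]
      congr 1
      abel
    rw [hApq] at e1
    have hAne : A p q ≠ 0 := by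
      simp only [hA, circulantM, Matrix.of_apply]
      exact hc _
    have h3 : A p q * (d₁ (p + 1) * d₂ (q + 1)) = A p q * (d₁ p * d₂ q) := by
      have h4 := e1.symm.trans e2
      linear_combination h4
    exact mul_left_cancel₀ hAne h3
  have step₁ : ∀ p : Fin (2 ^ i * n), d₁ (p + 1) = d₁ p * (d₂ 0 * (d₂ 1)⁻¹) := by
    intro p
    have h := key p 0
    rw [zero_add] at h
    rw [← mul_assoc, ← h, mul_assoc, mul_inv_cancel₀ (hd₂ne 1), mul_one]
  have step₂ : ∀ q : Fin (2 ^ i * n), d₂ (q + 1) = d₂ q * (d₁ 0 * (d₁ 1)⁻¹) := by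
    intro q
    have h := key 0 q
    rw [zero_add] at h
    have h1 := hd₁ne 1
    field_simp
    linear_combination h
  constructor
  · have := sum_geom_fin_eq_zero hkeven d₁ _ step₁ (hd₁ne 0)
    simpa [Matrix.trace, hd₁] using this
  · have := sum_geom_fin_eq_zero hkeven d₂ _ step₂ (hd₂ne 0)
    simpa [Matrix.trace, hd₂] using this
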